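/- arXiv:1610.04295 — 2 statements merged into one kernel-verified Lean document; each statement's English description precedes it below -/
import Mathlib

section
/- For every positive integer k, regarding the count as a real number, ρ_{k,0}(4) = 4^{k−1} + 2^{3k/2 − 1} · cos(kπ/4). -/
open Complex

/-- `rho k lam n` is the number of `k`-tuples `(x₁,…,x_k) ∈ (ℤ/nℤ)^k` with
`x₁² + ⋯ + x_k² ≡ lam (mod n)`. -/
noncomputable def rho (k : ℕ) (lam : ℤ) (n : ℕ) : ℕ :=
  Nat.card {x : Fin k → ZMod n // ∑ i, x i ^ 2 = (lam : ZMod n)}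

noncomputable def rho' (k : ℕ) (c : ZMod 4) : ℕ :=
  Nat.card {x : Fin k → ZMod 4 // ∑ i, x i ^ 2 = c}

lemma rho'_succ (k : ℕ) (c : ZMod 4) :
    rho' (k + 1) c = 2 * rho' k c + 2 * rho' k (c - 1) := by
  have e : {x : Fin (k+1) → ZMod 4 // ∑ i, x i ^ 2 = c} ≃
      Σ y : ZMod 4, {z : Fin k → ZMod 4 // ∑ i, z i ^ 2 = c - y ^ 2} := by
    refine ⟨fun x => ⟨x.1 0, ⟨Fin.tail x.1, ?_⟩⟩,
      fun p => ⟨Fin.cons p.1 p.2.1, ?_⟩, fun x => ?_, fun p => ?_⟩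
    · have := x.2
      rw [Fin.sum_univ_succ] at this
      have : ∑ i : Fin k, x.1 i.succ ^ 2 = c - x.1 0 ^ 2 := by
        rw [eq_sub_iff_add_eq, add_comm]; exact this
      simpa [Fin.tail] using this
    · have := p.2.2
      rw [Fin.sum_univ_succ]
      simp [this]
    · ext i
      simp [Fin.cons_self_tail]
    · rcases p with ⟨y, z, hz⟩
      simp [Fin.tail_cons]
      rfl
  rw [show rho' (k+1) c = Nat.card {x : Fin (k+1) → ZMod 4 // ∑ i, x i ^ 2 = c} from rfl,
    Nat.card_congr e, Nat.card_eq_fintype_card, Fintype.card_sigma]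
  have h0 : ((0 : ZMod 4) ^ 2 : ZMod 4) = 0 := by decide
  have h1 : ((1 : ZMod 4) ^ 2 : ZMod 4) = 1 := by decide
  have h2 : ((2 : ZMod 4) ^ 2 : ZMod 4) = 0 := by decide
  have h3 : ((3 : ZMod 4) ^ 2 : ZMod 4) = 1 := by decide
  have hr : ∀ c' : ZMod 4, Fintype.card {z : Fin k → ZMod 4 // ∑ i, z i ^ 2 = c'} = rho' k c' :=
    fun c' => (Nat.card_eq_fintype_card).symm
  simp only [hr]
  have huniv : (Finset.univ : Finset (ZMod 4)) = {0, 1, 2, 3} := by decide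
  rw [huniv, Finset.sum_insert (by decide), Finset.sum_insert (by decide),
    Finset.sum_insert (by decide), Finset.sum_singleton, h0, h1, h2, h3, sub_zero]
  ring

lemma rho'_zero (c : ZMod 4) : rho' 0 c = if c = 0 then 1 else 0 := by
  rw [rho', Nat.card_eq_fintype_card, Fintype.card_subtype]
  by_cases h : c = 0
  · subst h
    simp
  · simp only [h, if_false]
    rw [Finset.card_eq_zero, Finset.filter_eq_empty_iff]
    intro x _
    simpa [eq_comm] using h

lemma key (k : ℕ) (hk : 1 ≤ k) :
    (4 : ℂ) * (rho' k 0 : ℂ) = 4 ^ k + (2 + 2 * I) ^ k + (2 - 2 * I) ^ k ∧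
    (4 : ℂ) * (rho' k 1 : ℂ) = 4 ^ k + (-I) * (2 + 2 * I) ^ k + I * (2 - 2 * I) ^ k ∧
    (4 : ℂ) * (rho' k 2 : ℂ) = 4 ^ k - (2 + 2 * I) ^ k - (2 - 2 * I) ^ k ∧
    (4 : ℂ) * (rho' k 3 : ℂ) = 4 ^ k + I * (2 + 2 * I) ^ k + (-I) * (2 - 2 * I) ^ k := by
  induction k with
  | zero => omega
  | succ n ih =>
    rcases Nat.lt_or_ge n 1 with h1 | h1
    · have hn : n = 0 := by omega
      subst hn
      have e0 : rho' (0 + 1) 0 = 2 := by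
        rw [rho'_succ, rho'_zero, rho'_zero]; decide
      have e1 : rho' (0 + 1) 1 = 2 := by
        rw [rho'_succ, rho'_zero, rho'_zero]; decide
      have e2 : rho' (0 + 1) 2 = 0 := by
        rw [rho'_succ, rho'_zero, rho'_zero]; decide
      have e3 : rho' (0 + 1) 3 = 0 := by
        rw [rho'_succ, rho'_zero, rho'_zero]; decide
      rw [e0, e1, e2, e3]
      refine ⟨by push_cast; ring, by push_cast; linear_combination 4 * Complex.I_sq,
        by push_cast; ring, by push_cast; linear_combination (-4 : ℂ) * Complex.I_sq⟩
    · obtain ⟨H0, H1, H2, H3⟩ := ih h1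
      have s0 : (0 : ZMod 4) - 1 = 3 := by decide
      have s1 : (1 : ZMod 4) - 1 = 0 := by decide
      have s2 : (2 : ZMod 4) - 1 = 1 := by decide
      have s3 : (3 : ZMod 4) - 1 = 2 := by decide
      refine ⟨?_, ?_, ?_, ?_⟩
      · rw [rho'_succ, s0]; push_cast
        linear_combination 2 * H0 + 2 * H3
      · rw [rho'_succ, s1]; push_cast
        linear_combination 2 * H1 + 2 * H0 +
          (2 * ((2 + 2 * I) ^ n + (2 - 2 * I) ^ n)) * Complex.I_sq
      · rw [rho'_succ, s2]; push_cast
        linear_combination 2 * H2 + 2 * H1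
      · rw [rho'_succ, s3]; push_cast
        linear_combination 2 * H3 + 2 * H2 +
          (-2 * ((2 + 2 * I) ^ n + (2 - 2 * I) ^ n)) * Complex.I_sq

lemma sqrt8_mul_sqrt2 : Real.sqrt 8 * Real.sqrt 2 = 4 := by
  rw [← Real.sqrt_mul (by norm_num : (0:ℝ) ≤ 8)]
  rw [show (8 : ℝ) * 2 = 4 ^ 2 by norm_num, Real.sqrt_sq (by norm_num)]

lemma hw : (2 + 2 * I : ℂ) = (Real.sqrt 8 : ℝ) * Complex.exp ((Real.pi / 4 : ℝ) * I) := by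
  rw [Complex.exp_mul_I, ← Complex.ofReal_cos, ← Complex.ofReal_sin,
    Real.cos_pi_div_four, Real.sin_pi_div_four]
  have h : ((Real.sqrt 8 : ℝ) : ℂ) * ((Real.sqrt 2 : ℝ) : ℂ) = 4 := by
    rw [← Complex.ofReal_mul]
    norm_num [sqrt8_mul_sqrt2]
  push_cast
  linear_combination (-(1 + I) / 2) * h

lemma hPre (k : ℕ) : ((2 + 2 * I : ℂ) ^ k).re = Real.sqrt 8 ^ k * Real.cos (k * Real.pi / 4) := by
  rw [hw, mul_pow, ← Complex.exp_nat_mul]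
  rw [show (k : ℂ) * ((Real.pi / 4 : ℝ) * I) = ((k * Real.pi / 4 : ℝ) : ℂ) * I by
    push_cast; ring]
  rw [← Complex.ofReal_pow, Complex.re_ofReal_mul, Complex.exp_ofReal_mul_I_re]

/-- `ρ_{k,0}(4) = 4^{k−1} + 2^{3k/2 − 1} · cos(kπ/4)`. -/
theorem rho_zero_four (k : ℕ) (hk : 0 < k) :
    (rho k 0 4 : ℝ) =
      4 ^ (k - 1) + 2 ^ (3 * (k : ℝ) / 2 - 1) * Real.cos (k * Real.pi / 4) := by
  have hrho : rho k 0 4 = rho' k 0 := by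
    have : ((0 : ℤ) : ZMod 4) = 0 := by norm_num
    simp [rho, rho', this]
  have hsum : (2 + 2 * I : ℂ) ^ k + (2 - 2 * I) ^ k =
      ((2 * (Real.sqrt 8 ^ k * Real.cos (k * Real.pi / 4)) : ℝ) : ℂ) := by
    have hc : ((2 : ℂ) - 2 * I) = (starRingEnd ℂ) (2 + 2 * I) := by
      apply Complex.ext <;> simp
    rw [hc, ← map_pow, Complex.add_conj, hPre]
  have hR : (4 : ℝ) * (rho' k 0 : ℝ) =
      4 ^ k + 2 * (Real.sqrt 8 ^ k * Real.cos (k * Real.pi / 4)) := by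
    have h := (key k hk).1
    rw [add_assoc, hsum] at h
    exact_mod_cast h
  have h8 : Real.sqrt 8 = (2 : ℝ) ^ ((3 : ℝ) / 2) := by
    rw [Real.sqrt_eq_rpow, show (8 : ℝ) = (2 : ℝ) ^ (3 : ℝ) by
      norm_num, ← Real.rpow_mul (by norm_num)]
    norm_num
  have h8k : Real.sqrt 8 ^ k = (2 : ℝ) ^ (3 * (k : ℝ) / 2) := by
    rw [h8, ← Real.rpow_natCast ((2 : ℝ) ^ ((3 : ℝ) / 2)) k,
      ← Real.rpow_mul (by norm_num)]
    congr 1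
    ring
  have hsub : (2 : ℝ) ^ (3 * (k : ℝ) / 2 - 1) = (2 : ℝ) ^ (3 * (k : ℝ) / 2) / 2 := by
    rw [Real.rpow_sub (by norm_num), Real.rpow_one]
  obtain ⟨m, rfl⟩ : ∃ m, k = m + 1 := ⟨k - 1, by omega⟩
  rw [hrho, hsub, Nat.add_sub_cancel]
  rw [h8k] at hR
  rw [pow_succ] at hR
  linarith [hR]
end

section
/- Let p be an odd prime, k a positive integer, s ≥ 1 an integer, and λ an integer with 0 < λ < p^s. Write λ = p^r·λ' with 0 ≤ r < s and p ∤ λ'. Then ρ_{k,λ}(p^s) = Σ_{i=0}^{⌊r/2⌋} p^{ki + (s−2i−1)(k−1)} · ρ^(1)_{k, (λ/p^{2i}) mod p}(p). -/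
open Function

/-- `rho1 k lam p s` is the number of `k`-tuples `(x₁,…,x_k) ∈ (ℤ/p^sℤ)^k` with
`x₁² + ⋯ + x_k² ≡ lam (mod p^s)` such that `p ∤ xᵢ` for at least one index `i`. -/
noncomputable def rho1 (k : ℕ) (lam : ℤ) (p s : ℕ) : ℕ :=
  Nat.card {x : Fin k → ZMod (p ^ s) //
    (∑ i, x i ^ 2 = (lam : ZMod (p ^ s))) ∧ ∃ i, ¬ (p : ZMod (p ^ s)) ∣ x i}

lemma fiber_card_mul {G H : Type*} [AddCommGroup G] [AddCommGroup H] [Finite G] [Finite H]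
    (f : G →+ H) (hf : Function.Surjective f) (h : H) :
    Nat.card {g : G // f g = h} * Nat.card H = Nat.card G := by
  obtain ⟨g0, hg0⟩ := hf h
  have e : {g : G // f g = h} ≃ f.ker := by
    refine ⟨fun x => ⟨x.1 - g0, ?_⟩, fun x => ⟨g0 + x.1, ?_⟩, fun x => by ext; simp, fun x => by ext; simp⟩
    · simp [AddMonoidHom.mem_ker, map_sub, x.2, hg0]
    · have h2 := x.2
      rw [AddMonoidHom.mem_ker] at h2
      rw [map_add, h2, hg0, add_zero]
  rw [Nat.card_congr e,
    ← Nat.card_congr (QuotientAddGroup.quotientKerEquivOfSurjective f hf).toEquiv, mul_comm]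
  exact (AddSubgroup.card_eq_card_quotient_mul_card_addSubgroup f.ker).symm

lemma card_eq_card_mul_of_fiber {α β : Type*} [Finite α] [Finite β] (f : α → β) (m : ℕ)
    (hm : ∀ b, Nat.card {a : α // f a = b} = m) : Nat.card α = Nat.card β * m := by
  classical
  cases nonempty_fintype α
  cases nonempty_fintype β
  calc Nat.card α = ∑ b : β, Fintype.card {a // f a = b} := by
        rw [← Nat.card_congr (Equiv.sigmaFiberEquiv f), Nat.card_eq_fintype_card, Fintype.card_sigma]
    _ = ∑ _b : β, m := Finset.sum_congr rfl fun b _ => by rw [← Nat.card_eq_fintype_card, hm]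
    _ = Nat.card β * m := by
        rw [Finset.sum_const, Finset.card_univ, smul_eq_mul, Nat.card_eq_fintype_card]

lemma castHom_surj {m n : ℕ} [NeZero m] (h : m ∣ n) : Surjective (ZMod.castHom h (ZMod m)) := by
  intro b
  refine ⟨(b.val : ZMod n), ?_⟩
  rw [map_natCast]
  exact ZMod.natCast_rightInverse b

lemma castHom_eq_zero_iff {m n : ℕ} [NeZero n] (h : m ∣ n) (z : ZMod n) :
    ZMod.castHom h (ZMod m) z = 0 ↔ (m : ZMod n) ∣ z := by
  constructor
  · intro hz
    have h1 : ZMod.castHom h (ZMod m) ((z.val : ℕ) : ZMod n) = 0 := by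
      rw [ZMod.natCast_rightInverse z]; exact hz
    rw [map_natCast, ZMod.natCast_eq_zero_iff] at h1
    obtain ⟨c, hc⟩ := h1
    refine ⟨(c : ZMod n), ?_⟩
    rw [← ZMod.natCast_rightInverse z, hc]
    push_cast
    ring
  · rintro ⟨w, rfl⟩
    rw [map_mul, map_natCast, ZMod.natCast_self, zero_mul]

lemma dvd_iff_castHom_dvd {p m n : ℕ} [NeZero n] [NeZero m] (h : m ∣ n) (hpm : p ∣ m) (z : ZMod n) :
    (p : ZMod n) ∣ z ↔ (p : ZMod m) ∣ ZMod.castHom h (ZMod m) z := by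
  constructor
  · rintro ⟨w, rfl⟩
    exact ⟨_, by rw [map_mul, map_natCast]⟩
  · rintro ⟨w, hw⟩
    obtain ⟨w', hw'⟩ := castHom_surj h w
    have h0 : ZMod.castHom h (ZMod m) (z - p * w') = 0 := by
      rw [map_sub, map_mul, map_natCast, hw', hw, sub_self]
    rw [castHom_eq_zero_iff h] at h0
    obtain ⟨c, hc⟩ := h0
    obtain ⟨q, rfl⟩ := hpm
    refine ⟨w' + q * c, ?_⟩
    have h2 : z - (p : ZMod n) * w' = ((p * q : ℕ) : ZMod n) * c := hc
    push_cast at h2 ⊢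
    linear_combination h2

lemma lin_count {p : ℕ} (hp : p.Prime) {k : ℕ} (a : Fin k → ZMod p) (b : ZMod p)
    (ha : ∃ i, a i ≠ 0) :
    Nat.card {t : Fin k → ZMod p // ∑ i, a i * t i = b} * p = p ^ k := by
  haveI := Fact.mk hp
  let F : (Fin k → ZMod p) →+ ZMod p :=
    ⟨⟨fun t => ∑ i, a i * t i, by simp⟩, fun t u => by simp [mul_add, Finset.sum_add_distrib]⟩
  have hF : ∀ t, F t = ∑ i, a i * t i := fun t => rfl
  have hsurj : Surjective F := by
    obtain ⟨j, hj⟩ := ha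
    intro c
    refine ⟨Pi.single j ((a j)⁻¹ * c), ?_⟩
    rw [hF]
    simp only [Pi.single_apply, mul_ite, mul_zero]
    rw [Finset.sum_ite_eq' Finset.univ j fun x => a x * ((a j)⁻¹ * c)]
    simp [← mul_assoc, mul_inv_cancel₀ hj]
  have h2 := fiber_card_mul F hsurj b
  rw [Nat.card_fun, Nat.card_zmod, Nat.card_eq_fintype_card (α := Fin k), Fintype.card_fin] at h2
  rw [← h2]
  congr 1

/-- injectivity of `t ↦ a * t.val` from `ZMod b` to `ZMod (a*b)`. -/
lemma emap_inj {a b : ℕ} [NeZero b] [NeZero (a * b)] {t u : ZMod b}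
    (h : (a : ZMod (a * b)) * (t.val : ZMod (a * b)) = a * (u.val : ZMod (a * b))) : t = u := by
  have ha : (a : ℤ) ≠ 0 := by
    have h' : a ≠ 0 := by
      rintro rfl
      exact NeZero.ne (0 * b) (zero_mul b)
    exact_mod_cast h'
  have h1 : ((a * t.val : ℤ) : ZMod (a * b)) = ((a * u.val : ℤ) : ZMod (a * b)) := by
    push_cast; exact_mod_cast h
  rw [ZMod.intCast_eq_intCast_iff_dvd_sub] at h1
  have h2 : ((a : ℤ) * b) ∣ (a : ℤ) * (u.val - t.val) := by
    push_cast at h1 ⊢; convert h1 using 1; ring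
  rw [mul_dvd_mul_iff_left ha] at h2
  have h3 : ((t.val : ℤ) : ZMod b) = ((u.val : ℤ) : ZMod b) := by
    rw [ZMod.intCast_eq_intCast_iff_dvd_sub]; exact_mod_cast h2
  push_cast at h3
  rwa [ZMod.natCast_rightInverse t, ZMod.natCast_rightInverse u] at h3

/-- surjectivity of `t ↦ a * t.val` onto multiples of `a`. -/
lemma emap_exists {a b : ℕ} [NeZero b] [NeZero (a * b)] (z : ZMod (a * b))
    (hz : (a : ZMod (a * b)) ∣ z) : ∃ t : ZMod b, z = a * (t.val : ZMod (a * b)) := by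
  obtain ⟨w, rfl⟩ := hz
  have hb : b ∣ a * b := dvd_mul_left b a
  set v := (ZMod.castHom hb (ZMod b) w).val with hv
  refine ⟨ZMod.castHom hb (ZMod b) w, ?_⟩
  have h0 : ZMod.castHom hb (ZMod b) (w - (v : ZMod (a * b))) = 0 := by
    rw [map_sub, map_natCast, hv, ZMod.natCast_rightInverse, sub_self]
  rw [castHom_eq_zero_iff hb] at h0
  obtain ⟨c, hc⟩ := h0
  have hab : ((a * b : ℕ) : ZMod (a * b)) = 0 := ZMod.natCast_self _
  push_cast at hab
  linear_combination (a : ZMod (a * b)) * hc + c * hab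

/-- `a * u = 0` in `ZMod (a*b)` iff `b ∣ u`. -/
lemma mul_eq_zero_iff_dvd {a b : ℕ} [NeZero (a * b)] (ha : 0 < a) (u : ZMod (a * b)) :
    (a : ZMod (a * b)) * u = 0 ↔ (b : ZMod (a * b)) ∣ u := by
  constructor
  · intro h
    have h1 : ((a * u.val : ℕ) : ZMod (a * b)) = 0 := by
      push_cast
      rw [ZMod.natCast_rightInverse u]; exact h
    rw [ZMod.natCast_eq_zero_iff] at h1
    have h2 : b ∣ u.val := (Nat.mul_dvd_mul_iff_left ha).mp h1
    obtain ⟨c, hc⟩ := h2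
    refine ⟨(c : ZMod (a * b)), ?_⟩
    rw [← ZMod.natCast_rightInverse u, hc]
    push_cast; ring
  · rintro ⟨w, rfl⟩
    have hab : ((a * b : ℕ) : ZMod (a * b)) = 0 := ZMod.natCast_self _
    push_cast at hab
    rw [← mul_assoc, hab, zero_mul]

lemma rho1_step (p : ℕ) (hp : p.Prime) (hodd : Odd p) (k : ℕ) (s : ℕ) (hs : 1 ≤ s) (lam : ℤ) :
    rho1 k lam p (s + 1) = p ^ (k - 1) * rho1 k lam p s := by
  haveI := Fact.mk hp
  have hp0 : 0 < p := hp.pos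
  haveI : NeZero p := ⟨hp0.ne'⟩
  haveI : NeZero (p ^ s) := NeZero.of_pos (pow_pos hp0 s)
  haveI : NeZero (p ^ s * p) := NeZero.of_pos (by positivity)
  simp only [rho1]
  rw [pow_succ p s]
  have hdnN : p ^ s ∣ p ^ s * p := Dvd.intro _ rfl
  have hpn : p ∣ p ^ s := dvd_pow_self p (by omega)
  have hpN : p ∣ p ^ s * p := Dvd.intro_left _ rfl
  set π := ZMod.castHom hdnN (ZMod (p ^ s)) with hπdef
  set ρ := ZMod.castHom hpN (ZMod p) with hρdef
  set A := {x : Fin k → ZMod (p ^ s * p) //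
    (∑ i, x i ^ 2 = (lam : ZMod (p ^ s * p))) ∧ ∃ i, ¬ (p : ZMod (p ^ s * p)) ∣ x i} with hA
  set B := {x : Fin k → ZMod (p ^ s) //
    (∑ i, x i ^ 2 = (lam : ZMod (p ^ s))) ∧ ∃ i, ¬ (p : ZMod (p ^ s)) ∣ x i} with hB
  have hdvd_iff : ∀ z : ZMod (p ^ s * p), ((p : ZMod (p ^ s * p)) ∣ z ↔ (p : ZMod (p ^ s)) ∣ π z) :=
    fun z => dvd_iff_castHom_dvd hdnN hpn z
  have fprop : ∀ x : A, (∑ i, π (x.1 i) ^ 2 = (lam : ZMod (p ^ s))) ∧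
      ∃ i, ¬ (p : ZMod (p ^ s)) ∣ π (x.1 i) := by
    intro x
    constructor
    · have h1 := congrArg π x.2.1
      rw [map_sum, map_intCast] at h1
      simpa using h1
    · obtain ⟨i, hi⟩ := x.2.2
      exact ⟨i, fun hd => hi ((hdvd_iff _).mpr hd)⟩
  set f : A → B := fun x => ⟨fun i => π (x.1 i), fprop x⟩ with hf
  have key : ∀ b : B, Nat.card {a : A // f a = b} = p ^ (k - 1) := by
    rintro ⟨y, hy⟩
    obtain ⟨j0, hj0⟩ := id hy.2
    have hy1 : ∑ i, y i ^ 2 = (lam : ZMod (p ^ s)) := hy.1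
    have hk : 0 < k := j0.pos
    set x₀ : Fin k → ZMod (p ^ s * p) := fun i => ((y i).val : ZMod (p ^ s * p)) with hx₀
    have hπx₀ : ∀ i, π (x₀ i) = y i := by
      intro i
      rw [hx₀]
      simp only [map_natCast]
      exact ZMod.natCast_rightInverse (y i)
    have hker : π ((∑ i, x₀ i ^ 2) - (lam : ZMod (p ^ s * p))) = 0 := by
      rw [map_sub, map_sum, map_intCast]
      simp only [map_pow, hπx₀]
      rw [hy1, sub_self]
    rw [castHom_eq_zero_iff hdnN] at hker
    obtain ⟨c, hc⟩ := hker
    push_cast at hc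
    set a : Fin k → ZMod p := fun i => 2 * ρ (x₀ i) with ha_def
    have hρx₀ : ∀ i, (ρ (x₀ i) = 0 ↔ (p : ZMod (p ^ s)) ∣ y i) := by
      intro i
      rw [castHom_eq_zero_iff hpN, hdvd_iff, hπx₀]
    have h2ne : (2 : ZMod p) ≠ 0 := by
      have hnd : ¬ (p ∣ 2) := by
        intro hd
        have := (Nat.prime_dvd_prime_iff_eq hp Nat.prime_two).mp hd
        rw [Nat.odd_iff] at hodd
        omega
      intro h0
      rw [show (2 : ZMod p) = ((2 : ℕ) : ZMod p) by push_cast; ring] at h0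
      exact hnd ((ZMod.natCast_eq_zero_iff 2 p).mp h0)
    have ha : ∃ i, a i ≠ 0 := by
      refine ⟨j0, ?_⟩
      rw [ha_def]
      exact mul_ne_zero h2ne (fun h0 => hj0 ((hρx₀ j0).mp h0))
    have hnn : ((p : ZMod (p ^ s * p)) ^ s) * ((p : ZMod (p ^ s * p)) ^ s) = 0 := by
      have hd : (p ^ s * p) ∣ (p ^ s * p ^ s) := mul_dvd_mul_left _ hpn
      have h1 : ((p ^ s * p ^ s : ℕ) : ZMod (p ^ s * p)) = 0 :=
        (ZMod.natCast_eq_zero_iff _ _).mpr hd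
      push_cast at h1
      exact h1
    have hρps : ρ ((p : ZMod (p ^ s * p)) ^ s) = 0 := by
      rw [map_pow, map_natCast, ZMod.natCast_self, zero_pow (by omega : s ≠ 0)]
    have hπps : π ((p : ZMod (p ^ s * p)) ^ s) = 0 := by
      rw [map_pow, map_natCast]
      have : ((p ^ s : ℕ) : ZMod (p ^ s)) = 0 := ZMod.natCast_self _
      push_cast at this
      exact this
    set xmap : (Fin k → ZMod p) → (Fin k → ZMod (p ^ s * p)) :=
      fun t i => x₀ i + (p : ZMod (p ^ s * p)) ^ s * (((t i).val : ℕ) : ZMod (p ^ s * p))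
      with hxmap
    have hρτ : ∀ t : ZMod p, ρ (((t.val : ℕ)) : ZMod (p ^ s * p)) = t := by
      intro t
      rw [map_natCast]
      exact ZMod.natCast_rightInverse t
    have keyiff : ∀ t : Fin k → ZMod p,
        ((∑ i, xmap t i ^ 2 = (lam : ZMod (p ^ s * p))) ↔ (∑ i, a i * t i = - ρ c)) := by
      intro t
      have expand : ∀ i, xmap t i ^ 2
          = x₀ i ^ 2 + (p : ZMod (p ^ s * p)) ^ s
              * (2 * x₀ i * (((t i).val : ℕ) : ZMod (p ^ s * p))) := by
        intro i
        rw [hxmap]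
        linear_combination ((((t i).val : ℕ) : ZMod (p ^ s * p)) ^ 2) * hnn
      rw [Finset.sum_congr rfl fun i _ => expand i, Finset.sum_add_distrib, ← Finset.mul_sum]
      set T := ∑ i, 2 * x₀ i * (((t i).val : ℕ) : ZMod (p ^ s * p)) with hT
      have hsum : ρ (c + T) = ρ c + ∑ i, a i * t i := by
        rw [map_add, hT, map_sum]
        congr 1
        refine Finset.sum_congr rfl fun i _ => ?_
        rw [map_mul, map_mul, map_ofNat, ha_def, hρτ]
      constructor
      · intro h
        have h1 : (p : ZMod (p ^ s * p)) ^ s * (c + T) = 0 := by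
          linear_combination h - hc
        have h1' : ((p ^ s : ℕ) : ZMod (p ^ s * p)) * (c + T) = 0 := by push_cast; exact h1
        rw [mul_eq_zero_iff_dvd (pow_pos hp0 s) _] at h1'
        have h2 : ρ (c + T) = 0 := (castHom_eq_zero_iff hpN _).mpr h1'
        rw [hsum] at h2
        linear_combination h2
      · intro h
        have h2 : ρ (c + T) = 0 := by rw [hsum, h]; ring
        rw [castHom_eq_zero_iff hpN] at h2
        have h1' : ((p ^ s : ℕ) : ZMod (p ^ s * p)) * (c + T) = 0 :=
          (mul_eq_zero_iff_dvd (pow_pos hp0 s) _).mpr h2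
        push_cast at h1'
        linear_combination h1' + hc
    -- the bijection
    set L := {t : Fin k → ZMod p // ∑ i, a i * t i = - ρ c} with hL
    have hcond : ∀ t : L, ((∑ i, xmap t.1 i ^ 2 = (lam : ZMod (p ^ s * p))) ∧
        ∃ i, ¬ (p : ZMod (p ^ s * p)) ∣ xmap t.1 i) := by
      intro t
      refine ⟨(keyiff t.1).mpr t.2, ⟨j0, fun hd => ?_⟩⟩
      have h0 : ρ (xmap t.1 j0) = 0 := (castHom_eq_zero_iff hpN _).mpr hd
      rw [hxmap] at h0
      simp only [map_add, map_mul, hρps, zero_mul, add_zero] at h0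
      exact hj0 ((hρx₀ j0).mp h0)
    have hfg : ∀ t : L, f ⟨xmap t.1, hcond t⟩ = ⟨y, hy⟩ := by
      intro t
      apply Subtype.ext
      funext i
      show π (xmap t.1 i) = y i
      rw [hxmap]
      simp only [map_add, map_mul, hπps, zero_mul, add_zero, hπx₀]
    set g : L → {a' : A // f a' = ⟨y, hy⟩} := fun t => ⟨⟨xmap t.1, hcond t⟩, hfg t⟩ with hg
    have hginj : Function.Injective g := by
      intro t u htu
      have h1 : xmap t.1 = xmap u.1 := congrArg (fun z => z.1.1) htu
      apply Subtype.ext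
      funext i
      have h2 := congrFun h1 i
      rw [hxmap] at h2
      simp only at h2
      have h3 : (p : ZMod (p ^ s * p)) ^ s * (((t.1 i).val : ℕ) : ZMod (p ^ s * p))
          = (p : ZMod (p ^ s * p)) ^ s * (((u.1 i).val : ℕ) : ZMod (p ^ s * p)) := by
        linear_combination h2
      refine emap_inj (a := p ^ s) (b := p) ?_
      push_cast
      exact h3
    have hgsurj : Function.Surjective g := by
      rintro ⟨⟨xv, hxv⟩, hfx⟩
      have hred : ∀ i, π (xv i) = y i := by
        intro i
        exact congrFun (congrArg Subtype.val hfx) i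
      have hdv : ∀ i, ∃ ti : ZMod p, xv i - x₀ i
          = ((p ^ s : ℕ) : ZMod (p ^ s * p)) * ((ti.val : ℕ) : ZMod (p ^ s * p)) := by
        intro i
        apply emap_exists (a := p ^ s) (b := p)
        rw [← castHom_eq_zero_iff hdnN]
        rw [map_sub, hπx₀, hred, sub_self]
      choose t ht using hdv
      have hxveq : xv = xmap t := by
        funext i
        have := ht i
        push_cast at this
        rw [hxmap]
        linear_combination this
      have htL : ∑ i, a i * t i = - ρ c := by
        apply (keyiff t).mp
        rw [← hxveq]
        exact hxv.1
      refine ⟨⟨t, htL⟩, ?_⟩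
      apply Subtype.ext
      apply Subtype.ext
      exact hxveq.symm
    have hcards : Nat.card L = Nat.card {a' : A // f a' = ⟨y, hy⟩} :=
      Nat.card_eq_of_bijective g ⟨hginj, hgsurj⟩
    have hcards' : Nat.card {t : Fin k → ZMod p // ∑ i, a i * t i = - ρ c}
        = Nat.card {a' : A // f a' = ⟨y, hy⟩} := hcards
    have hcount := lin_count hp a (- ρ c) ha
    rw [hcards'] at hcount
    have hpow : p ^ (k - 1) * p = p ^ k := by
      have h5 := pow_succ p (k - 1)
      rw [Nat.sub_add_cancel hk] at h5
      exact h5.symm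
    exact Nat.eq_of_mul_eq_mul_right hp0 (by rw [hcount, ← hpow])
  have hfin := card_eq_card_mul_of_fiber f (p ^ (k - 1)) key
  rw [hfin, Nat.mul_comm]

lemma rho_decomp (p k s : ℕ) (hp : 0 < p) (lam : ℤ) :
    rho k lam (p ^ s) = rho1 k lam p s +
      Nat.card {x : Fin k → ZMod (p ^ s) //
        (∑ i, x i ^ 2 = (lam : ZMod (p ^ s))) ∧ ∀ i, (p : ZMod (p ^ s)) ∣ x i} := by
  classical
  haveI : NeZero (p ^ s) := NeZero.of_pos (pow_pos hp s)
  rw [rho, rho1, Nat.card_eq_fintype_card, Nat.card_eq_fintype_card, Nat.card_eq_fintype_card]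
  rw [Fintype.card_subtype, Fintype.card_subtype, Fintype.card_subtype]
  have h1 : ∀ x : Fin k → ZMod (p ^ s),
      ((∑ i, x i ^ 2 = (lam : ZMod (p ^ s))) ∧ ∀ i, (p : ZMod (p ^ s)) ∣ x i)
      ↔ ((∑ i, x i ^ 2 = (lam : ZMod (p ^ s))) ∧ ¬ ∃ i, ¬ (p : ZMod (p ^ s)) ∣ x i) := by
    intro x
    rw [not_exists_not]
  rw [Finset.filter_congr (fun x _ => h1 x)]
  have h2 := Finset.card_filter_add_card_filter_not
    (s := Finset.univ.filter (fun x : Fin k → ZMod (p ^ s) => ∑ i, x i ^ 2 = (lam : ZMod (p ^ s))))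
    (p := fun x => ∃ i, ¬ (p : ZMod (p ^ s)) ∣ x i)
  rw [Finset.filter_filter, Finset.filter_filter] at h2
  rw [← h2]


/-- Count of all-divisible solutions. -/
lemma dcount (p : ℕ) (hp : p.Prime) (k s : ℕ) (μ : ℤ) :
    Nat.card {x : Fin k → ZMod (p ^ (s + 2)) //
      (∑ i, x i ^ 2 = (((p : ℤ) ^ 2 * μ : ℤ) : ZMod (p ^ (s + 2)))) ∧
        ∀ i, (p : ZMod (p ^ (s + 2))) ∣ x i}
    = p ^ k * rho k μ (p ^ s) := by
  have hp0 : 0 < p := hp.pos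
  haveI : NeZero p := ⟨hp0.ne'⟩
  haveI : NeZero (p ^ s) := NeZero.of_pos (pow_pos hp0 s)
  haveI : NeZero (p ^ (s + 1)) := NeZero.of_pos (pow_pos hp0 _)
  haveI : NeZero (p * p ^ (s + 1)) := NeZero.of_pos (by positivity)
  rw [pow_succ' p (s + 1)]
  have hdn : p ^ s ∣ p ^ (s + 1) := pow_dvd_pow p (Nat.le_succ s)
  set π := ZMod.castHom hdn (ZMod (p ^ s)) with hπdef
  have hπval : ∀ y : ZMod (p ^ (s + 1)), π y = ((y.val : ℕ) : ZMod (p ^ s)) := by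
    intro y
    conv_lhs => rw [← ZMod.natCast_rightInverse y]
    rw [map_natCast]
  -- key iff
  have keyiff : ∀ y : Fin k → ZMod (p ^ (s + 1)),
      ((∑ i, ((p : ZMod (p * p ^ (s + 1))) * (((y i).val : ℕ) : ZMod (p * p ^ (s + 1)))) ^ 2
          = (((p : ℤ) ^ 2 * μ : ℤ) : ZMod (p * p ^ (s + 1))))
        ↔ (∑ i, π (y i) ^ 2 = (μ : ZMod (p ^ s)))) := by
    intro y
    have hL : (∑ i, ((p : ZMod (p * p ^ (s + 1))) * (((y i).val : ℕ) : ZMod (p * p ^ (s + 1)))) ^ 2)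
        = (((∑ i, (p : ℤ) ^ 2 * ((y i).val : ℤ) ^ 2 : ℤ)) : ZMod (p * p ^ (s + 1))) := by
      push_cast
      ring
    rw [hL, ZMod.intCast_eq_intCast_iff_dvd_sub]
    have hfac : ((p : ℤ) ^ 2 * μ) - (∑ i, (p : ℤ) ^ 2 * ((y i).val : ℤ) ^ 2)
        = (p : ℤ) ^ 2 * (μ - ∑ i, ((y i).val : ℤ) ^ 2) := by
      rw [← Finset.mul_sum]
      ring
    have hmod : ((p * p ^ (s + 1) : ℕ) : ℤ) = (p : ℤ) ^ 2 * (p : ℤ) ^ s := by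
      push_cast
      ring
    rw [hfac, hmod, mul_dvd_mul_iff_left (pow_ne_zero 2 (by exact_mod_cast hp0.ne' : (p:ℤ) ≠ 0))]
    have h2 : ((p : ℤ) ^ s ∣ μ - ∑ i, ((y i).val : ℤ) ^ 2)
        ↔ ((∑ i, ((y i).val : ℤ) ^ 2 : ℤ) : ZMod (p ^ s)) = (μ : ZMod (p ^ s)) := by
      rw [ZMod.intCast_eq_intCast_iff_dvd_sub]
      constructor
      · intro h; exact_mod_cast h
      · intro h; exact_mod_cast h
    rw [h2]
    have h3 : ((∑ i, ((y i).val : ℤ) ^ 2 : ℤ) : ZMod (p ^ s)) = ∑ i, π (y i) ^ 2 := by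
      push_cast
      refine Finset.sum_congr rfl fun i _ => ?_
      rw [hπval]
    rw [h3]
  -- bijection between all-divisible solutions and A'
  set A' := {y : Fin k → ZMod (p ^ (s + 1)) // ∑ i, π (y i) ^ 2 = (μ : ZMod (p ^ s))} with hA'
  set C := {x : Fin k → ZMod (p * p ^ (s + 1)) //
      (∑ i, x i ^ 2 = (((p : ℤ) ^ 2 * μ : ℤ) : ZMod (p * p ^ (s + 1)))) ∧
        ∀ i, (p : ZMod (p * p ^ (s + 1))) ∣ x i} with hC
  have hGcond : ∀ y : A', ((∑ i, ((p : ZMod (p * p ^ (s + 1)))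
        * (((y.1 i).val : ℕ) : ZMod (p * p ^ (s + 1)))) ^ 2
      = (((p : ℤ) ^ 2 * μ : ℤ) : ZMod (p * p ^ (s + 1)))) ∧
      ∀ i, (p : ZMod (p * p ^ (s + 1))) ∣ ((p : ZMod (p * p ^ (s + 1)))
        * (((y.1 i).val : ℕ) : ZMod (p * p ^ (s + 1))))) := by
    intro y
    exact ⟨(keyiff y.1).mpr y.2, fun i => Dvd.intro _ rfl⟩
  set G : A' → C := fun y => ⟨fun i => (p : ZMod (p * p ^ (s + 1)))
      * (((y.1 i).val : ℕ) : ZMod (p * p ^ (s + 1))), hGcond y⟩ with hG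
  have hGinj : Function.Injective G := by
    intro y y' hyy
    have h1 := congrArg Subtype.val hyy
    apply Subtype.ext
    funext i
    exact emap_inj (a := p) (b := p ^ (s + 1)) (congrFun h1 i)
  have hGsurj : Function.Surjective G := by
    rintro ⟨xv, hxv1, hxv2⟩
    have hex : ∀ i, ∃ ti : ZMod (p ^ (s + 1)),
        xv i = (p : ZMod (p * p ^ (s + 1))) * ((ti.val : ℕ) : ZMod (p * p ^ (s + 1))) :=
      fun i => emap_exists (a := p) (b := p ^ (s + 1)) (xv i) (hxv2 i)
    choose t ht using hex
    have hxveq : xv = fun i => (p : ZMod (p * p ^ (s + 1)))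
        * (((t i).val : ℕ) : ZMod (p * p ^ (s + 1))) := funext ht
    have htA : ∑ i, π (t i) ^ 2 = (μ : ZMod (p ^ s)) := by
      have hxv1' := hxv1
      simp only [hxveq] at hxv1'
      exact (keyiff t).mp hxv1'
    exact ⟨⟨t, htA⟩, Subtype.ext hxveq.symm⟩
  have hCA : Nat.card C = Nat.card A' := (Nat.card_eq_of_bijective G ⟨hGinj, hGsurj⟩).symm
  -- fiber counting for A' over rho-set
  set B' := {z : Fin k → ZMod (p ^ s) // ∑ i, z i ^ 2 = (μ : ZMod (p ^ s))} with hB'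
  have hfprop : ∀ y : A', ∑ i, π (y.1 i) ^ 2 = (μ : ZMod (p ^ s)) := fun y => y.2
  set f : A' → B' := fun y => ⟨fun i => π (y.1 i), hfprop y⟩ with hf
  set Fπ : (Fin k → ZMod (p ^ (s + 1))) →+ (Fin k → ZMod (p ^ s)) :=
    ⟨⟨fun y i => π (y i), by funext i; simp⟩, fun y y' => by funext i; simp⟩ with hFπ
  have hFπsurj : Function.Surjective Fπ := by
    intro z
    refine ⟨fun i => (((z i).val : ℕ) : ZMod (p ^ (s + 1))), ?_⟩
    funext i
    show π (((z i).val : ℕ) : ZMod (p ^ (s + 1))) = z i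
    rw [map_natCast]
    exact ZMod.natCast_rightInverse (z i)
  have hfiberFπ : ∀ z : Fin k → ZMod (p ^ s),
      Nat.card {y : Fin k → ZMod (p ^ (s + 1)) // Fπ y = z} = p ^ k := by
    intro z
    have h1 := fiber_card_mul Fπ hFπsurj z
    rw [Nat.card_fun, Nat.card_fun, Nat.card_zmod, Nat.card_zmod,
      Nat.card_eq_fintype_card (α := Fin k), Fintype.card_fin] at h1
    have h2 : (p ^ (s + 1)) ^ k = p ^ k * (p ^ s) ^ k := by
      rw [pow_succ' p s, mul_pow]
    rw [h2] at h1
    exact Nat.eq_of_mul_eq_mul_right (pow_pos (pow_pos hp0 s) k) h1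
  have hfiber : ∀ b : B', Nat.card {y : A' // f y = b} = p ^ k := by
    rintro ⟨z, hz⟩
    rw [← hfiberFπ z]
    apply Nat.card_congr
    refine ⟨fun y => ⟨y.1.1, ?_⟩, fun y => ⟨⟨y.1, ?_⟩, ?_⟩, fun y => rfl, fun y => rfl⟩
    · have := congrArg Subtype.val y.2
      funext i
      exact congrFun this i
    · show ∑ i, π (y.1 i) ^ 2 = (μ : ZMod (p ^ s))
      have : ∀ i, π (y.1 i) = z i := fun i => congrFun y.2 i
      rw [Finset.sum_congr rfl fun i _ => by rw [this i]]
      exact hz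
    · apply Subtype.ext
      funext i
      exact congrFun y.2 i
  have := card_eq_card_mul_of_fiber f (p ^ k) hfiber
  rw [hCA, this, rho]
  exact Nat.mul_comm _ _

lemma dzero_one (p k : ℕ) (hp : p.Prime) (lam : ℤ) (hnd : ¬ (p : ℤ) ∣ lam) :
    Nat.card {x : Fin k → ZMod (p ^ 1) //
      (∑ i, x i ^ 2 = (lam : ZMod (p ^ 1))) ∧ ∀ i, (p : ZMod (p ^ 1)) ∣ x i} = 0 := by
  haveI : NeZero (p ^ 1) := NeZero.of_pos (pow_pos hp.pos 1)
  haveI : IsEmpty {x : Fin k → ZMod (p ^ 1) //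
      (∑ i, x i ^ 2 = (lam : ZMod (p ^ 1))) ∧ ∀ i, (p : ZMod (p ^ 1)) ∣ x i} := by
    constructor
    rintro ⟨x, hx1, hx2⟩
    have hp0 : (p : ZMod (p ^ 1)) = 0 := by
      rw [ZMod.natCast_eq_zero_iff, pow_one]
    have hx0 : ∀ i, x i = 0 := fun i => by
      have := hx2 i
      rwa [hp0, zero_dvd_iff] at this
    have hl0 : (lam : ZMod (p ^ 1)) = 0 := by
      rw [← hx1]
      rw [Finset.sum_congr rfl fun i _ => by rw [hx0 i]]
      simp
    rw [ZMod.intCast_zmod_eq_zero_iff_dvd] at hl0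
    apply hnd
    rw [pow_one] at hl0
    exact_mod_cast hl0
  exact Nat.card_of_isEmpty

lemma dzero_two (p k s : ℕ) (hp : p.Prime) (hs2 : 2 ≤ s) (lam : ℤ)
    (hnd : ¬ ((p : ℤ) ^ 2 ∣ lam)) :
    Nat.card {x : Fin k → ZMod (p ^ s) //
      (∑ i, x i ^ 2 = (lam : ZMod (p ^ s))) ∧ ∀ i, (p : ZMod (p ^ s)) ∣ x i} = 0 := by
  haveI : NeZero (p ^ s) := NeZero.of_pos (pow_pos hp.pos s)
  haveI : NeZero (p ^ 2) := NeZero.of_pos (pow_pos hp.pos 2)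
  haveI : IsEmpty {x : Fin k → ZMod (p ^ s) //
      (∑ i, x i ^ 2 = (lam : ZMod (p ^ s))) ∧ ∀ i, (p : ZMod (p ^ s)) ∣ x i} := by
    constructor
    rintro ⟨x, hx1, hx2⟩
    have h22 : p ^ 2 ∣ p ^ s := pow_dvd_pow p hs2
    set π₂ := ZMod.castHom h22 (ZMod (p ^ 2)) with hπ₂
    have hsum : ∑ i, π₂ (x i) ^ 2 = (lam : ZMod (p ^ 2)) := by
      have := congrArg π₂ hx1
      rw [map_sum, map_intCast] at this
      simpa using this
    have hdvd : ∀ i, ∃ w, π₂ (x i) = (p : ZMod (p ^ 2)) * w := by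
      intro i
      obtain ⟨w, hw⟩ := hx2 i
      exact ⟨π₂ w, by rw [hw, map_mul, map_natCast]⟩
    choose w hw using hdvd
    have hp2 : ((p : ZMod (p ^ 2))) ^ 2 = 0 := by
      have : ((p ^ 2 : ℕ) : ZMod (p ^ 2)) = 0 := ZMod.natCast_self _
      push_cast at this
      exact this
    have hl0 : (lam : ZMod (p ^ 2)) = 0 := by
      rw [← hsum, Finset.sum_congr rfl fun i _ => by rw [hw i]]
      have : ∀ i, ((p : ZMod (p ^ 2)) * w i) ^ 2 = 0 := fun i => by
        have : ((p : ZMod (p ^ 2)) * w i) ^ 2 = (p : ZMod (p ^ 2)) ^ 2 * w i ^ 2 := by ring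
        rw [this, hp2, zero_mul]
      rw [Finset.sum_congr rfl fun i _ => this i]
      simp
    rw [ZMod.intCast_zmod_eq_zero_iff_dvd] at hl0
    apply hnd
    exact_mod_cast hl0
  exact Nat.card_of_isEmpty

lemma rho1_pow (p : ℕ) (hp : p.Prime) (hodd : Odd p) (k : ℕ) (lam : ℤ) :
    ∀ s : ℕ, rho1 k lam p (s + 1) = p ^ (s * (k - 1)) * rho1 k lam p 1 := by
  intro s
  induction s with
  | zero => simp
  | succ n IH =>
    rw [rho1_step p hp hodd k (n + 1) (by omega) lam, IH, ← mul_assoc, ← pow_add]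
    congr 2
    ring

lemma rho1_mod (p k : ℕ) (hp : p.Prime) (lam : ℤ) :
    rho1 k (lam % (p : ℤ)) p 1 = rho1 k lam p 1 := by
  have hcast : ((lam % (p : ℤ) : ℤ) : ZMod (p ^ 1)) = (lam : ZMod (p ^ 1)) := by
    rw [ZMod.intCast_eq_intCast_iff_dvd_sub]
    have h1 : lam - lam % (p : ℤ) = (p : ℤ) * (lam / (p : ℤ)) := by
      have := Int.mul_ediv_add_emod lam (p : ℤ)
      linarith
    rw [h1]
    have : ((p ^ 1 : ℕ) : ℤ) = (p : ℤ) := by push_cast; ring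
    rw [this]
    exact Dvd.intro _ rfl
  rw [rho1, rho1, hcast]


lemma main_aux (p : ℕ) (hp : p.Prime) (hodd : Odd p) (k : ℕ) (hk : 0 < k) (lam' : ℤ)
    (hnd : ¬ (p : ℤ) ∣ lam') :
    ∀ r : ℕ, ∀ s : ℕ, ∀ lam : ℤ, 1 ≤ s → r < s → lam = (p : ℤ) ^ r * lam' →
    rho k lam (p ^ s) =
      ∑ i ∈ Finset.range (r / 2 + 1),
        p ^ (k * i + (s - 2 * i - 1) * (k - 1)) * rho1 k ((lam / (p : ℤ) ^ (2 * i)) % p) p 1 := by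
  intro r
  induction r using Nat.strong_induction_on with
  | _ r IH =>
  intro s lam hs hr hfac
  have hpz : (p : ℤ) ≠ 0 := by exact_mod_cast hp.pos.ne'
  by_cases hr2 : r < 2
  · -- base case
    have hdiv : r / 2 = 0 := by omega
    rw [hdiv, Finset.sum_range_one]
    simp only [Nat.mul_zero, Nat.sub_zero, pow_zero, Int.ediv_one, Nat.zero_add, zero_add,
      mul_zero, Nat.zero_mul, zero_mul]
    have hD : Nat.card {x : Fin k → ZMod (p ^ s) //
        (∑ i, x i ^ 2 = (lam : ZMod (p ^ s))) ∧ ∀ i, (p : ZMod (p ^ s)) ∣ x i} = 0 := by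
      rcases Nat.lt_or_ge s 2 with hs1 | hs2
      · have hs1' : s = 1 := by omega
        subst hs1'
        apply dzero_one p k hp
        have hr0 : r = 0 := by omega
        rw [hfac, hr0, pow_zero, one_mul]
        exact hnd
      · apply dzero_two p k s hp hs2
        intro hdd
        apply hnd
        rcases Nat.eq_zero_or_pos r with hr0 | hr1
        · rw [hfac, hr0, pow_zero, one_mul] at hdd
          exact (dvd_pow_self (p : ℤ) two_ne_zero).trans hdd
        · have hr1' : r = 1 := by omega
          rw [hfac, hr1', pow_one, sq] at hdd
          exact (mul_dvd_mul_iff_left hpz).mp hdd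
    rw [rho_decomp p k s hp.pos lam, hD, Nat.add_zero]
    clear hD
    have hchain := rho1_pow p hp hodd k lam (s - 1)
    have he1 : s - 1 + 1 = s := by omega
    rw [he1] at hchain
    rw [hchain, rho1_mod p k hp lam]
  · -- inductive step
    push_neg at hr2
    have hs3 : 3 ≤ s := by omega
    set μ := (p : ℤ) ^ (r - 2) * lam' with hμ
    have hfac2 : lam = (p : ℤ) ^ 2 * μ := by
      rw [hfac, hμ, ← mul_assoc, ← pow_add]
      congr 2
      omega
    have ha1 : r - 2 < r := by omega
    have ha2 : 1 ≤ s - 2 := by omega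
    have ha3 : r - 2 < s - 2 := by omega
    have hD : Nat.card {x : Fin k → ZMod (p ^ s) //
        (∑ i, x i ^ 2 = (lam : ZMod (p ^ s))) ∧ ∀ i, (p : ZMod (p ^ s)) ∣ x i}
        = p ^ k * rho k μ (p ^ (s - 2)) := by
      have he2 : s - 2 + 2 = s := by omega
      have h0 := dcount p hp k (s - 2) μ
      rw [he2] at h0
      rw [← hfac2] at h0
      exact h0
    have hIH := IH (r - 2) ha1 (s - 2) μ ha2 ha3 hμ
    rw [rho_decomp p k s hp.pos lam, hD, hIH]
    clear hD
    have hrdiv : r / 2 + 1 = ((r - 2) / 2 + 1) + 1 := by omega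
    rw [hrdiv]
    conv_rhs => rw [Finset.sum_range_succ']
    rw [add_comm (rho1 k lam p s)]
    congr 1
    · rw [Finset.mul_sum]
      refine Finset.sum_congr rfl fun i hi => ?_
      have hi2 : 2 * i ≤ r - 2 := by
        have := Finset.mem_range.mp hi
        omega
      have e1 : μ / (p : ℤ) ^ (2 * i) = (p : ℤ) ^ (r - 2 - 2 * i) * lam' := by
        rw [hμ, show (p : ℤ) ^ (r - 2) = (p : ℤ) ^ (2 * i) * (p : ℤ) ^ (r - 2 - 2 * i) from by
          rw [← pow_add]; congr 1; omega]
        rw [mul_assoc, Int.mul_ediv_cancel_left _ (pow_ne_zero _ hpz)]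
      have e2 : lam / (p : ℤ) ^ (2 * (i + 1)) = (p : ℤ) ^ (r - 2 - 2 * i) * lam' := by
        rw [hfac, show (p : ℤ) ^ r = (p : ℤ) ^ (2 * (i + 1)) * (p : ℤ) ^ (r - 2 - 2 * i) from by
          rw [← pow_add]; congr 1; omega]
        rw [mul_assoc, Int.mul_ediv_cancel_left _ (pow_ne_zero _ hpz)]
      rw [e1, ← e2, ← mul_assoc, ← pow_add]
      have hexp : k + (k * i + (s - 2 - 2 * i - 1) * (k - 1))
          = k * (i + 1) + (s - 2 * (i + 1) - 1) * (k - 1) := by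
        have h9 : s - 2 - 2 * i - 1 = s - 2 * (i + 1) - 1 := by omega
        rw [h9]
        ring
      rw [hexp]
    · have hchain := rho1_pow p hp hodd k lam (s - 1)
      have he1 : s - 1 + 1 = s := by omega
      rw [he1] at hchain
      rw [hchain]
      simp only [Nat.mul_zero, Nat.sub_zero, pow_zero, Int.ediv_one, Nat.zero_add, zero_add,
        mul_zero, Nat.zero_mul, zero_mul]
      rw [rho1_mod p k hp lam]

/-- For an odd prime `p` and `λ = p^r·λ'` with `p ∤ λ'`,
`ρ_{k,λ}(p^s) = Σ_{i=0}^{⌊r/2⌋} p^{ki+(s−2i−1)(k−1)} · ρ^{(1)}_{k,(λ/p^{2i}) mod p}(p)`. -/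
theorem rho_odd_prime_pow_nonzero (p : ℕ) (hp : p.Prime) (hodd : Odd p) (k : ℕ) (hk : 0 < k)
    (s : ℕ) (hs : 1 ≤ s) (lam : ℤ) (hlam0 : 0 < lam) (hlam1 : lam < (p : ℤ) ^ s)
    (r : ℕ) (lam' : ℤ) (hr : r < s) (hfac : lam = (p : ℤ) ^ r * lam') (hnd : ¬ (p : ℤ) ∣ lam') :
    rho k lam (p ^ s) =
      ∑ i ∈ Finset.range (r / 2 + 1),
        p ^ (k * i + (s - 2 * i - 1) * (k - 1)) * rho1 k ((lam / (p : ℤ) ^ (2 * i)) % p) p 1 :=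
  main_aux p hp hodd k hk lam' hnd r s lam hs hr hfac
end
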